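/- Over the binary symmetric channel (all weights equal 1, so soft weight = Hamming weight), if e* is the unique minimum-Hamming-weight valid TEP with w = W_H(e*), then the number of guesses made by GND (which checks all TEPs of weight < w, plus those of weight w up to e* in lexicographic order) is at least Σ_{i=0}^{w-1} C(N,i), while the number of guesses of GCD is at most min{2^K, Σ_{i=0}^{w-1} C(K,i)} + |{e_R ∈ F_2^K : W_H(e_R) = w}|. -/

import Mathlib

/-- Soft weight of a binary vector with respect to nonnegative weights. -/
def softW {α : Type*} [Fintype α] (w : α → ℝ) (e : α → ZMod 2) : ℝ :=
  ∑ i, ((e i).val : ℝ) * w i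

/-- Hamming weight of a binary vector. -/
def hamW {α : Type*} [Fintype α] [DecidableEq α] (e : α → ZMod 2) : ℕ :=
  (Finset.univ.filter fun i => e i ≠ 0).card

/-- `a` is strictly prior to `b` in lexicographic order (first coordinate most significant). -/
def lexPrior {n : ℕ} (a b : Fin n → ZMod 2) : Prop :=
  ∃ i, (∀ j, j < i → a j = b j) ∧ (a i).val < (b i).val

open Finset in
/-- Binary vectors over `α` correspond to subsets of `α` (their supports). -/
def binEquiv (α : Type*) [Fintype α] [DecidableEq α] :
    (α → ZMod 2) ≃ Finset α where
  toFun e := Finset.univ.filter fun i => e i ≠ 0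
  invFun s := fun i => if i ∈ s then 1 else 0
  left_inv e := by
    funext i
    have h : ∀ x : ZMod 2, (if x ≠ 0 then (1 : ZMod 2) else 0) = x := by decide
    simp only [Finset.mem_filter, Finset.mem_univ, true_and]
    exact h (e i)
  right_inv s := by
    ext i
    simp

lemma cardEq (α : Type*) [Fintype α] [DecidableEq α] (i : ℕ) :
    ((Finset.univ : Finset (α → ZMod 2)).filter fun e => hamW e = i).card
      = (Fintype.card α).choose i := by
  have h : ((Finset.univ : Finset (α → ZMod 2)).filter fun e => hamW e = i).card
      = (Finset.powersetCard i (Finset.univ : Finset α)).card := by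
    apply Finset.card_bij (fun e _ => binEquiv α e)
    · intro e he
      rw [Finset.mem_filter] at he
      rw [Finset.mem_powersetCard_univ]
      exact he.2
    · intro a _ b _ hab
      exact (binEquiv α).injective hab
    · intro s hs
      refine ⟨(binEquiv α).symm s, ?_, by simp⟩
      rw [Finset.mem_filter]
      rw [Finset.mem_powersetCard_univ] at hs
      refine ⟨Finset.mem_univ _, ?_⟩
      show ((binEquiv α) ((binEquiv α).symm s)).card = i
      rw [Equiv.apply_symm_apply]
      exact hs
  rw [h, Finset.card_powersetCard, Finset.card_univ]

lemma cardLt (α : Type*) [Fintype α] [DecidableEq α] (w : ℕ) :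
    ((Finset.univ : Finset (α → ZMod 2)).filter fun e => hamW e < w).card
      = ∑ i ∈ Finset.range w, (Fintype.card α).choose i := by
  have h : ((Finset.univ : Finset (α → ZMod 2)).filter fun e => hamW e < w)
      = (Finset.range w).biUnion fun i =>
          Finset.univ.filter fun e => hamW e = i := by
    ext e
    simp only [Finset.mem_filter, Finset.mem_univ, true_and, Finset.mem_biUnion,
      Finset.mem_range]
    exact ⟨fun h => ⟨_, h, rfl⟩, fun ⟨i, hi, h⟩ => h ▸ hi⟩
  rw [h, Finset.card_biUnion]
  · exact Finset.sum_congr rfl fun i _ => cardEq α i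
  · intro i _ j _ hij
    rw [Function.onFun, Finset.disjoint_left]
    intro e h1 h2
    rw [Finset.mem_filter] at h1 h2
    exact hij (h1.2 ▸ h2.2)

lemma hamW_le (α : Type*) [Fintype α] [DecidableEq α] (e : α → ZMod 2) :
    hamW e ≤ Fintype.card α := by
  unfold hamW
  rw [← Finset.card_univ]
  exact Finset.card_filter_le _ _

lemma ncard_eq_filter {α : Type*} [Fintype α] (P : α → Prop) [DecidablePred P] :
    {x | P x}.ncard = (Finset.univ.filter P).card := by
  rw [← Set.ncard_coe_finset]
  congr 1
  ext x
  simp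

theorem stmt_9 (m k : ℕ) (P : Matrix (Fin m) (Fin k) (ZMod 2)) (s : Fin m → ZMod 2)
    (estar : Fin m ⊕ Fin k → ZMod 2)
    (hvalid : (Matrix.fromCols 1 P).mulVec estar = s)
    (huniq : ∀ e, (Matrix.fromCols 1 P).mulVec e = s → e ≠ estar →
      hamW estar < hamW e)
    (enumN : Fin (2 ^ (m + k)) → Fin m ⊕ Fin k → ZMod 2)
    (hN : Function.Bijective enumN)
    (hNmono : ∀ j j', j ≤ j' → hamW (enumN j) ≤ hamW (enumN j'))
    (enumK : Fin (2 ^ k) → Fin k → ZMod 2) (hK : Function.Bijective enumK)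
    (hKmono : ∀ j j', j ≤ j' → hamW (enumK j) ≤ hamW (enumK j')) :
    (∑ i ∈ Finset.range (hamW estar), (m + k).choose i) ≤
      ({j : Fin (2 ^ (m + k)) | ∀ j', j' < j → enumN j' ≠ estar}).ncard ∧
    ({j : Fin (2 ^ k) | ∀ j', j' < j → hamW (enumK j') < hamW estar}).ncard ≤
      min (2 ^ k) (∑ i ∈ Finset.range (hamW estar), k.choose i) +
        ({eR : Fin k → ZMod 2 | hamW eR = hamW estar}).ncard := by
  classical
  set w := hamW estar with hw
  constructor
  · -- GND lower bound
    rw [ncard_eq_filter]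
    have hcard : (Finset.univ.filter fun j : Fin (2 ^ (m + k)) =>
        hamW (enumN j) < w).card
        = ((Finset.univ : Finset (Fin m ⊕ Fin k → ZMod 2)).filter
            fun e => hamW e < w).card := by
      apply Finset.card_bij (fun j _ => enumN j)
      · intro j hj
        rw [Finset.mem_filter] at hj ⊢
        exact ⟨Finset.mem_univ _, hj.2⟩
      · intro a _ b _ hab
        exact hN.1 hab
      · intro e he
        obtain ⟨j, rfl⟩ := hN.2 e
        rw [Finset.mem_filter] at he
        exact ⟨j, Finset.mem_filter.mpr ⟨Finset.mem_univ _, he.2⟩, rfl⟩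
    have hsub : (Finset.univ.filter fun j : Fin (2 ^ (m + k)) =>
        hamW (enumN j) < w) ⊆
        (Finset.univ.filter fun j => ∀ j', j' < j → enumN j' ≠ estar) := by
      intro j hj
      rw [Finset.mem_filter] at hj ⊢
      refine ⟨Finset.mem_univ _, fun j' hlt heq => ?_⟩
      have h1 := hNmono j' j hlt.le
      rw [heq] at h1
      omega
    calc ∑ i ∈ Finset.range w, (m + k).choose i
        = ((Finset.univ : Finset (Fin m ⊕ Fin k → ZMod 2)).filter
            fun e => hamW e < w).card := by
          rw [cardLt]
          simp
      _ = (Finset.univ.filter fun j : Fin (2 ^ (m + k)) =>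
            hamW (enumN j) < w).card := hcard.symm
      _ ≤ _ := Finset.card_le_card hsub
  · -- GCD upper bound
    rw [ncard_eq_filter, ncard_eq_filter]
    set T : Finset (Fin (2 ^ k)) :=
      Finset.univ.filter fun j => ∀ j', j' < j → hamW (enumK j') < w with hT
    have hsplit : (T.filter fun j => hamW (enumK j) < w).card
        + (T.filter fun j => ¬ hamW (enumK j) < w).card = T.card :=
      Finset.card_filter_add_card_filter_not _
    -- bound on the first part
    have h1a : (T.filter fun j => hamW (enumK j) < w).card
        ≤ ∑ i ∈ Finset.range w, k.choose i := by
      have hcard : (Finset.univ.filter fun j : Fin (2 ^ k) =>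
          hamW (enumK j) < w).card
          = ((Finset.univ : Finset (Fin k → ZMod 2)).filter
              fun e => hamW e < w).card := by
        apply Finset.card_bij (fun j _ => enumK j)
        · intro j hj
          rw [Finset.mem_filter] at hj ⊢
          exact ⟨Finset.mem_univ _, hj.2⟩
        · intro a _ b _ hab
          exact hK.1 hab
        · intro e he
          obtain ⟨j, rfl⟩ := hK.2 e
          rw [Finset.mem_filter] at he
          exact ⟨j, Finset.mem_filter.mpr ⟨Finset.mem_univ _, he.2⟩, rfl⟩
      have hsub : (T.filter fun j => hamW (enumK j) < w)
          ⊆ Finset.univ.filter fun j : Fin (2 ^ k) => hamW (enumK j) < w := by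
        intro j hj
        rw [Finset.mem_filter] at hj ⊢
        exact ⟨Finset.mem_univ _, hj.2⟩
      calc (T.filter fun j => hamW (enumK j) < w).card
          ≤ (Finset.univ.filter fun j : Fin (2 ^ k) =>
              hamW (enumK j) < w).card := Finset.card_le_card hsub
        _ = ((Finset.univ : Finset (Fin k → ZMod 2)).filter
              fun e => hamW e < w).card := hcard
        _ = ∑ i ∈ Finset.range w, k.choose i := by
            rw [cardLt]
            simp
    have h1b : (T.filter fun j => hamW (enumK j) < w).card ≤ 2 ^ k := by
      calc (T.filter fun j => hamW (enumK j) < w).card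
          ≤ (Finset.univ : Finset (Fin (2 ^ k))).card :=
            Finset.card_le_card (Finset.filter_subset _ _ |>.trans
              (Finset.filter_subset _ _))
        _ = 2 ^ k := by simp
    -- bound on the second part
    have h2a : (T.filter fun j => ¬ hamW (enumK j) < w).card ≤ 1 := by
      rw [Finset.card_le_one]
      intro a ha b hb
      rw [Finset.mem_filter, hT, Finset.mem_filter] at ha hb
      by_contra hne
      rcases lt_or_gt_of_ne hne with h | h
      · exact hb.1.2 a h |> ha.2
      · exact ha.1.2 b h |> hb.2
    have h2 : (T.filter fun j => ¬ hamW (enumK j) < w).card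
        ≤ (Finset.univ.filter fun eR : Fin k → ZMod 2 => hamW eR = w).card := by
      rcases (T.filter fun j => ¬ hamW (enumK j) < w).eq_empty_or_nonempty with
        hemp | ⟨j, hj⟩
      · rw [hemp]
        simp
      · have hwk : w ≤ k := by
          rw [Finset.mem_filter] at hj
          have h1 := hamW_le _ (enumK j)
          rw [Fintype.card_fin] at h1
          omega
        have : (Finset.univ.filter fun eR : Fin k → ZMod 2 =>
            hamW eR = w).card = k.choose w := by
          rw [cardEq]
          simp
        rw [this]
        exact h2a.trans (Nat.choose_pos hwk)
    omega
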